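/- For every real x > 0: 0 ≤ x·log x − (x−1) − (1/2)·(x−1)² + (1/6)·(x−1)³ ≤ (x−1)⁴/3. -/

import Mathlib

open Real

private lemma key_nonneg {f d : ℝ → ℝ} (hd : ∀ y : ℝ, 0 < y → HasDerivAt f (d y) y)
    (hpos : ∀ y : ℝ, 1 < y → 0 < d y) (hneg : ∀ y : ℝ, 0 < y → y < 1 → d y < 0)
    (h1 : f 1 = 0) {x : ℝ} (hx : 0 < x) : 0 ≤ f x := by
  rcases lt_trichotomy x 1 with h | h | h
  · have hanti : StrictAntiOn f (Set.Ioc (0:ℝ) 1) := by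
      apply strictAntiOn_of_deriv_neg (convex_Ioc 0 1)
      · exact fun y hy => (hd y hy.1).continuousAt.continuousWithinAt
      · intro y hy
        rw [interior_Ioc] at hy
        rw [(hd y hy.1).deriv]
        exact hneg y hy.1 hy.2
    have := hanti ⟨hx, h.le⟩ ⟨zero_lt_one, le_refl 1⟩ h
    linarith [h1 ▸ this]
  · simp [h, h1]
  · have hmono : StrictMonoOn f (Set.Ici (1:ℝ)) := by
      apply strictMonoOn_of_deriv_pos (convex_Ici 1)
      · exact fun y hy => (hd y (lt_of_lt_of_le zero_lt_one hy)).continuousAt.continuousWithinAt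
      · intro y hy
        rw [interior_Ici] at hy
        rw [(hd y (lt_trans zero_lt_one hy)).deriv]
        exact hpos y hy
    have := hmono (Set.self_mem_Ici) (le_of_lt h) h
    linarith [h1 ▸ this]

private lemma log_lower {x : ℝ} (hx : 0 < x) :
    ((x - 1) + (x - 1) ^ 2 / 2 - (x - 1) ^ 3 / 6) / x ≤ Real.log x := by
  have h := key_nonneg
    (f := fun y => Real.log y - ((y - 1) + (y - 1) ^ 2 / 2 - (y - 1) ^ 3 / 6) / y)
    (d := fun y => (y - 1) ^ 3 / (3 * y ^ 2))
    (fun y hy => by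
      have h1 : HasDerivAt (fun y : ℝ => y - 1) 1 y := (hasDerivAt_id y).sub_const 1
      have hp : HasDerivAt (fun y : ℝ => (y - 1) + (y - 1) ^ 2 / 2 - (y - 1) ^ 3 / 6)
          (1 + (y - 1) - (y - 1) ^ 2 / 2) y := by
        have := (h1.add ((h1.pow 2).div_const 2)).sub ((h1.pow 3).div_const 6)
        exact this.congr_deriv (by norm_num; ring)
      have hq := hp.div (hasDerivAt_id y) (ne_of_gt hy)
      have := (Real.hasDerivAt_log (ne_of_gt hy)).sub hq
      refine this.congr_deriv ?_
      simp only [id]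
      field_simp
      ring)
    (fun y hy => div_pos (pow_pos (by linarith) 3) (by positivity))
    (fun y hy0 hy1 => by
      apply div_neg_of_neg_of_pos
      · exact Odd.pow_neg ⟨1, by norm_num⟩ (by linarith)
      · positivity)
    (by norm_num) hx
  linarith

private lemma log_upper {x : ℝ} (hx : 0 < x) :
    Real.log x ≤ ((x - 1) + (x - 1) ^ 2 / 2 - (x - 1) ^ 3 / 6 + (x - 1) ^ 4 / 3) / x := by
  have h := key_nonneg
    (f := fun y => ((y - 1) + (y - 1) ^ 2 / 2 - (y - 1) ^ 3 / 6 + (y - 1) ^ 4 / 3) / y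
      - Real.log y)
    (d := fun y => (y - 1) ^ 3 / y)
    (fun y hy => by
      have h1 : HasDerivAt (fun y : ℝ => y - 1) 1 y := (hasDerivAt_id y).sub_const 1
      have hp : HasDerivAt
          (fun y : ℝ => (y - 1) + (y - 1) ^ 2 / 2 - (y - 1) ^ 3 / 6 + (y - 1) ^ 4 / 3)
          (1 + (y - 1) - (y - 1) ^ 2 / 2 + 4 * (y - 1) ^ 3 / 3) y := by
        have := ((h1.add ((h1.pow 2).div_const 2)).sub ((h1.pow 3).div_const 6)).add
          ((h1.pow 4).div_const 3)
        exact this.congr_deriv (by norm_num; ring)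
      have hq := hp.div (hasDerivAt_id y) (ne_of_gt hy)
      have := hq.sub (Real.hasDerivAt_log (ne_of_gt hy))
      refine this.congr_deriv ?_
      simp only [id]
      field_simp
      ring)
    (fun y hy => div_pos (pow_pos (by linarith) 3) (by linarith))
    (fun y hy0 hy1 => by
      apply div_neg_of_neg_of_pos
      · exact Odd.pow_neg ⟨1, by norm_num⟩ (by linarith)
      · exact hy0)
    (by norm_num) hx
  linarith

/-- Taylor-type bounds for `x log x` around `x = 1`. -/
theorem xlogx_taylor_bounds (x : ℝ) (hx : 0 < x) :
    0 ≤ x * Real.log x - (x - 1) - (1 / 2) * (x - 1) ^ 2 + (1 / 6) * (x - 1) ^ 3 ∧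
    x * Real.log x - (x - 1) - (1 / 2) * (x - 1) ^ 2 + (1 / 6) * (x - 1) ^ 3
      ≤ (x - 1) ^ 4 / 3 := by
  have h1 := (div_le_iff₀ hx).mp (log_lower hx)
  have h2 := (le_div_iff₀ hx).mp (log_upper hx)
  constructor <;> nlinarith [h1, h2]
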